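/- Let F : Δ × Δ → Δ be the join functor sending ([k],[l]) to [k+l+1] (concatenation of linear orders, acting accordingly on morphisms). Then for every [n] ∈ Δ, the comma category (F ↓ [n]), whose objects are triples ([k],[l], g : [k+l+1] → [n]), has a weakly contractible nerve; hence F is a coinitial (initial) functor. -/

import Mathlib

open CategoryTheory Simplicial

/-- The join of two monotone maps: given `f : [a] → [c]` and `g : [b] → [d]`,
`joinMap f g : [a+b+1] → [c+d+1]` acts as `f` on the first block and as `g` on the
second block. -/
def joinMap {a b c d : ℕ} (f : Fin (a + 1) →o Fin (c + 1)) (g : Fin (b + 1) →o Fin (d + 1)) :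
    Fin (a + b + 2) →o Fin (c + d + 2) where
  toFun i :=
    if h : (i : ℕ) < a + 1 then
      ⟨(f ⟨(i : ℕ), h⟩ : ℕ), by have := (f ⟨(i : ℕ), h⟩).isLt; omega⟩
    else
      ⟨c + 1 + (g ⟨(i : ℕ) - (a + 1), by have := i.isLt; omega⟩ : ℕ), by
        have := (g ⟨(i : ℕ) - (a + 1), by have := i.isLt; omega⟩).isLt; omega⟩
  monotone' := by
    intro i j hij
    have hij' : (i : ℕ) ≤ (j : ℕ) := hij
    dsimp only
    split_ifs with hi hj hj
    · have hm := f.monotone (show (⟨(i : ℕ), hi⟩ : Fin (a + 1)) ≤ ⟨(j : ℕ), hj⟩ from hij')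
      exact Fin.mk_le_mk.mpr (Fin.le_def.mp hm)
    · have := (f ⟨(i : ℕ), hi⟩).isLt
      simp only [Fin.mk_le_mk]
      omega
    · omega
    · have hm := g.monotone (show (⟨(i : ℕ) - (a + 1), by have := i.isLt; omega⟩ : Fin (b + 1)) ≤
        ⟨(j : ℕ) - (a + 1), by have := j.isLt; omega⟩ from by
          simp only [Fin.mk_le_mk]; omega)
      have hm' := Fin.le_def.mp hm
      simp only [Fin.mk_le_mk]
      omega

theorem joinMap_val {a b c d : ℕ} (f : Fin (a + 1) →o Fin (c + 1)) (g : Fin (b + 1) →o Fin (d + 1))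
    (i : Fin (a + b + 2)) :
    ((joinMap f g i : Fin (c + d + 2)) : ℕ) =
      if h : (i : ℕ) < a + 1 then (f ⟨(i : ℕ), h⟩ : ℕ)
      else c + 1 + (g ⟨(i : ℕ) - (a + 1), by have := i.isLt; omega⟩ : ℕ) := by
  show (dite ((i : ℕ) < a + 1) _ _ : Fin (c + d + 2)).val = _
  split_ifs <;> rfl

/-- The join functor `Δ × Δ → Δ`, `([k], [l]) ↦ [k + l + 1]`, acting blockwise on
morphisms. -/
def joinFunctor : SimplexCategory × SimplexCategory ⥤ SimplexCategory where
  obj p := SimplexCategory.mk (p.1.len + p.2.len + 1)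
  map {p q} f := SimplexCategory.Hom.mk (joinMap f.1.toOrderHom f.2.toOrderHom)
  map_id := by
    intro p
    apply SimplexCategory.Hom.ext
    ext i
    simp only [SimplexCategory.Hom.toOrderHom_mk, SimplexCategory.id_toOrderHom, joinMap_val]
    split_ifs with h
    · rfl
    · simp
      omega
  map_comp := by
    intro p q r f g
    apply SimplexCategory.Hom.ext
    ext i
    simp only [SimplexCategory.Hom.toOrderHom_mk, SimplexCategory.comp_toOrderHom,
      OrderHom.comp_coe, Function.comp_apply, joinMap_val]
    split_ifs with h1 h2 h2
    · rfl
    · exact absurd (f.1.toOrderHom ⟨(i : ℕ), h1⟩).isLt h2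
    · omega
    · congr 2
      apply Fin.ext
      simp

open SimplexCategory in
/-- Auxiliary object of the comma category: `(([0],[0]), (a,b))` for `a ≤ b`. -/
private def cObj {d : SimplexCategory} (a b : Fin (d.len + 1)) (hab : a ≤ b) :
    CategoryTheory.CostructuredArrow joinFunctor d :=
  CategoryTheory.CostructuredArrow.mk
    ((SimplexCategory.Hom.mk
      (⟨fun i => if (i : ℕ) = 0 then a else b, by
        intro i j hij
        have h1 := Fin.le_def.mp hij
        have h2 := Fin.le_def.mp hab
        simp only [Fin.le_def]
        split_ifs <;> omega⟩ : Fin (0 + 0 + 1 + 1) →o Fin (d.len + 1)) :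
      joinFunctor.obj (mk 0, mk 0) ⟶ d))

open SimplexCategory in
/-- Auxiliary object: `(([n],[0]), i ↦ min i b)`. -/
private def bObj {d : SimplexCategory} (b : Fin (d.len + 1)) :
    CategoryTheory.CostructuredArrow joinFunctor d :=
  CategoryTheory.CostructuredArrow.mk
    ((SimplexCategory.Hom.mk
      (⟨fun i => ⟨min (i : ℕ) (b : ℕ), by have := b.isLt; omega⟩, by
        intro i j hij
        have h1 := Fin.le_def.mp hij
        simp only [Fin.mk_le_mk]
        omega⟩ : Fin (d.len + 0 + 1 + 1) →o Fin (d.len + 1)) :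
      joinFunctor.obj (mk d.len, mk 0) ⟶ d))

open SimplexCategory in
/-- Auxiliary object: `(([0],[n]), i ↦ i - 1)`. -/
private def eObj (d : SimplexCategory) :
    CategoryTheory.CostructuredArrow joinFunctor d :=
  CategoryTheory.CostructuredArrow.mk
    ((SimplexCategory.Hom.mk
      (⟨fun i => ⟨(i : ℕ) - 1, by have := i.isLt; omega⟩, by
        intro i j hij
        have h1 := Fin.le_def.mp hij
        simp only [Fin.mk_le_mk]
        omega⟩ : Fin (0 + d.len + 1 + 1) →o Fin (d.len + 1)) :
      joinFunctor.obj (mk 0, mk d.len) ⟶ d))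

/-- For every `[n]`, the comma category `(joinFunctor ↓ [n])` has a weakly contractible
nerve; hence the join functor `Δ × Δ → Δ` is coinitial (initial). -/
theorem joinFunctor_initial : joinFunctor.Initial := by
  constructor
  intro d
  let Z : CostructuredArrow joinFunctor d := cObj 0 0 le_rfl
  haveI : Nonempty (CostructuredArrow joinFunctor d) := ⟨Z⟩
  have key : ∀ X : CostructuredArrow joinFunctor d, Zigzag X Z := by
    intro X
    set p := X.left.1 with hp
    set q := X.left.2 with hq
    let g : Fin (p.len + q.len + 1 + 1) →o Fin (d.len + 1) := X.hom.toOrderHom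
    let a : Fin (d.len + 1) := g ⟨0, by omega⟩
    let b : Fin (d.len + 1) := g ⟨p.len + 1, by omega⟩
    have hab : a ≤ b := g.monotone (by simp [Fin.le_def])
    have hb0 : (0 : Fin (d.len + 1)) ≤ b := Fin.zero_le _
    -- step 1 : cObj a b ⟶ X
    have s1 : Nonempty (cObj a b hab ⟶ X) := by
      refine ⟨CategoryTheory.CostructuredArrow.homMk
        ((SimplexCategory.const (SimplexCategory.mk 0) p ⟨0, by omega⟩,
          SimplexCategory.const (SimplexCategory.mk 0) q ⟨0, by omega⟩) :
            ((SimplexCategory.mk 0, SimplexCategory.mk 0) : SimplexCategory × SimplexCategory) ⟶ X.left) ?_⟩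
      apply SimplexCategory.Hom.ext
      ext i
      simp only [SimplexCategory.comp_toOrderHom, OrderHom.comp_coe, Function.comp_apply]
      dsimp [cObj, joinFunctor, joinMap, SimplexCategory.const]
      dsimp only [DFunLike.coe]
      split_ifs with h1 h2 h2
      · rfl
      · omega
      · omega
      · rfl
    have s2 : Nonempty (cObj a b hab ⟶ bObj b) := by
      refine ⟨CategoryTheory.CostructuredArrow.homMk
        ((SimplexCategory.const (SimplexCategory.mk 0) (SimplexCategory.mk d.len) a,
          𝟙 (SimplexCategory.mk 0)) :
            ((SimplexCategory.mk 0, SimplexCategory.mk 0) : SimplexCategory × SimplexCategory) ⟶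
              (SimplexCategory.mk d.len, SimplexCategory.mk 0)) ?_⟩
      apply SimplexCategory.Hom.ext
      ext i
      simp only [SimplexCategory.comp_toOrderHom, OrderHom.comp_coe, Function.comp_apply]
      dsimp [cObj, bObj, joinFunctor, joinMap, SimplexCategory.const]
      dsimp only [DFunLike.coe]
      have hb := b.isLt
      have ha' := Fin.le_def.mp hab
      split_ifs with h1 h2 h2 <;> (try simp) <;> omega
    have s3 : Nonempty (cObj 0 b hb0 ⟶ bObj b) := by
      refine ⟨CategoryTheory.CostructuredArrow.homMk
        ((SimplexCategory.const (SimplexCategory.mk 0) (SimplexCategory.mk d.len) 0,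
          𝟙 (SimplexCategory.mk 0)) :
            ((SimplexCategory.mk 0, SimplexCategory.mk 0) : SimplexCategory × SimplexCategory) ⟶
              (SimplexCategory.mk d.len, SimplexCategory.mk 0)) ?_⟩
      apply SimplexCategory.Hom.ext
      ext i
      simp only [SimplexCategory.comp_toOrderHom, OrderHom.comp_coe, Function.comp_apply]
      dsimp [cObj, bObj, joinFunctor, joinMap, SimplexCategory.const]
      dsimp only [DFunLike.coe]
      have hb := b.isLt
      split_ifs with h1 h2 h2 <;> (try simp) <;> omega
    have s4 : Nonempty (cObj 0 b hb0 ⟶ eObj d) := by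
      refine ⟨CategoryTheory.CostructuredArrow.homMk
        ((𝟙 (SimplexCategory.mk 0),
          SimplexCategory.const (SimplexCategory.mk 0) (SimplexCategory.mk d.len) b) :
            ((SimplexCategory.mk 0, SimplexCategory.mk 0) : SimplexCategory × SimplexCategory) ⟶
              (SimplexCategory.mk 0, SimplexCategory.mk d.len)) ?_⟩
      apply SimplexCategory.Hom.ext
      ext i
      simp only [SimplexCategory.comp_toOrderHom, OrderHom.comp_coe, Function.comp_apply]
      dsimp [cObj, eObj, joinFunctor, joinMap, SimplexCategory.const]
      dsimp only [DFunLike.coe]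
      split_ifs with h1 h2 h2 <;> (try simp) <;> omega
    have s5 : Nonempty (Z ⟶ eObj d) := by
      refine ⟨CategoryTheory.CostructuredArrow.homMk
        ((𝟙 (SimplexCategory.mk 0),
          SimplexCategory.const (SimplexCategory.mk 0) (SimplexCategory.mk d.len) 0) :
            ((SimplexCategory.mk 0, SimplexCategory.mk 0) : SimplexCategory × SimplexCategory) ⟶
              (SimplexCategory.mk 0, SimplexCategory.mk d.len)) ?_⟩
      apply SimplexCategory.Hom.ext
      ext i
      simp only [SimplexCategory.comp_toOrderHom, OrderHom.comp_coe, Function.comp_apply]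
      dsimp [Z, cObj, eObj, joinFunctor, joinMap, SimplexCategory.const]
      dsimp only [DFunLike.coe]
      split_ifs with h1 h2 h2 <;> (try simp) <;> omega
    have z1 : Zigzag X (cObj a b hab) := Relation.ReflTransGen.single (Or.inr s1)
    have z2 : Zigzag (cObj a b hab) (bObj b) := Relation.ReflTransGen.single (Or.inl s2)
    have z3 : Zigzag (bObj b) (cObj 0 b hb0) := Relation.ReflTransGen.single (Or.inr s3)
    have z4 : Zigzag (cObj 0 b hb0) (eObj d) := Relation.ReflTransGen.single (Or.inl s4)
    have z5 : Zigzag (eObj d) Z := Relation.ReflTransGen.single (Or.inr s5)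
    exact ((((z1.trans z2).trans z3).trans z4).trans z5)
  apply zigzag_isConnected
  intro j₁ j₂
  exact (key j₁).trans (key j₂).symm
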